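/- Let L be a finite join-semidistributive lattice and let a ∈ L. If for each lower cover a' ⋖ a we set j_{a'} = min{c ∈ L : a' ∨ c = a}, then the join of the set {j_{a'} : a' ⋖ a} equals a. -/

import Mathlib

open scoped Classical in
/-- in a finite join-semidistributive lattice, the canonical joinands
of `a` — the minimal elements `j a'` of `{c | a' ⊔ c = a}` over the lower covers
`a' ⋖ a` — join to `a`. (For `a = ⊥` the join is empty and equals `⊥`.) -/
theorem stmt19 {L : Type*} [Lattice L] [OrderBot L] [Fintype L]
    (jsd : ∀ x y z : L, x ⊔ y = x ⊔ z → x ⊔ y = x ⊔ (y ⊓ z))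
    (a : L) (j : L → L)
    (hj : ∀ a' : L, a' ⋖ a → IsLeast {c : L | a' ⊔ c = a} (j a')) :
    (Finset.univ.filter (fun a' : L => a' ⋖ a)).sup j = a := by
  set b := (Finset.univ.filter (fun a' : L => a' ⋖ a)).sup j with hb
  have hble : b ≤ a := by
    apply Finset.sup_le
    intro a' ha'
    have hc : a' ⋖ a := (Finset.mem_filter.mp ha').2
    have := (hj a' hc).1
    calc j a' ≤ a' ⊔ j a' := le_sup_right
    _ = a := this
  rcases eq_or_lt_of_le hble with h | h
  · exact h
  · exfalso
    -- pick a maximal element of {c | b ≤ c ∧ c < a}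
    obtain ⟨a', ha'mem, ha'max⟩ :=
      Set.Finite.exists_maximalFor id {c : L | b ≤ c ∧ c < a} (Set.toFinite _) ⟨b, le_refl b, h⟩
    obtain ⟨hba', ha'a⟩ := ha'mem
    have hcov : a' ⋖ a := by
      refine ⟨ha'a, fun x hx hxa => ?_⟩
      have h2 : a' = x := le_antisymm hx.le (ha'max ⟨le_trans hba' hx.le, hxa⟩ hx.le)
      exact hx.ne h2
    have hmem : a' ∈ Finset.univ.filter (fun x : L => x ⋖ a) :=
      Finset.mem_filter.mpr ⟨Finset.mem_univ _, hcov⟩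
    have hjle : j a' ≤ a' := le_trans (Finset.le_sup (f := j) hmem) hba'
    have heq : a' ⊔ j a' = a := (hj a' hcov).1
    rw [sup_eq_left.mpr hjle] at heq
    exact ha'a.ne heq
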